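/- arXiv:1212.4742 — 2 statements merged into one kernel-verified Lean document; each statement's English description precedes it below -/
import Mathlib

section
/- E is the unique maximal proper S_0-invariant subgroup of G = Z_2^{*∞}; that is, every proper S_0-invariant subgroup of G is contained in E. -/
noncomputable section

abbrev Z2 : Type := Multiplicative (ZMod 2)
abbrev FP : Type := Monoid.CoprodI (fun _ : ℕ => Z2)

def gen (i : ℕ) : FP := Monoid.CoprodI.of (i := i) (Multiplicative.ofAdd (1 : ZMod 2))

def par : FP →* Z2 := Monoid.CoprodI.lift (fun _ => MonoidHom.id Z2)

/-- The subgroup of even-length words. -/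
def Ev : Subgroup FP := par.ker

/-- Endomorphism of `FP` identifying letters according to `f`. -/
def ident (f : ℕ → ℕ) : FP →* FP :=
  Monoid.CoprodI.lift (fun i => (Monoid.CoprodI.of (M := fun _ : ℕ => Z2) (i := f i)))

/-- `f` moves only finitely many letters. -/
def FinSupp (f : ℕ → ℕ) : Prop := ∃ n, ∀ k ≥ n, f k = k

/-- S₀-invariance. -/
def S0Inv (H : Subgroup FP) : Prop :=
  (∀ f : ℕ → ℕ, FinSupp f → ∀ x ∈ H, ident f x ∈ H) ∧
  (∀ k : ℕ, ∀ x ∈ H, gen k * x * gen k ∈ H)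

/-- Length of the reduced word of `x`. -/
def wlen (x : FP) : ℕ := (Monoid.CoprodI.Word.equiv x).toList.length

/-- Number of occurrences of the letter `i` in the reduced word of `x`. -/
def occ (x : FP) (i : ℕ) : ℕ :=
  ((Monoid.CoprodI.Word.equiv x).toList.map Sigma.fst).count i

/- Auxiliary lemmas -/

lemma ident_gen (f : ℕ → ℕ) (i : ℕ) : ident f (gen i) = gen (f i) := by
  simp [ident, gen, Monoid.CoprodI.lift_of]

lemma par_gen (i : ℕ) : par (gen i) = Multiplicative.ofAdd 1 := by
  simp [par, gen, Monoid.CoprodI.lift_of]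

lemma par_ident (f : ℕ → ℕ) : par.comp (ident f) = par := by
  apply Monoid.CoprodI.ext_hom
  intro i
  ext m
  simp [par, ident, Monoid.CoprodI.lift_of]

lemma gen_sq (i : ℕ) : gen i * gen i = 1 := by
  unfold gen
  rw [← MonoidHom.map_mul]
  have h : (Multiplicative.ofAdd (1 : ZMod 2)) * (Multiplicative.ofAdd 1) = 1 := by decide
  rw [h, MonoidHom.map_one]

lemma z2cases : ∀ m : Z2, m = 1 ∨ m = Multiplicative.ofAdd 1 := by decide

lemma top_gen : Subgroup.closure (Set.range gen) = ⊤ := by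
  rw [eq_top_iff]
  have key : ∀ x : FP, x ∈ Subgroup.closure (Set.range gen) := by
    intro x
    induction x using Monoid.CoprodI.induction_on with
    | one => exact one_mem _
    | of i m =>
        rcases z2cases m with h | h
        · rw [h, MonoidHom.map_one]; exact one_mem _
        · rw [h]; exact Subgroup.subset_closure ⟨i, rfl⟩
    | mul x y hx hy => exact mul_mem hx hy
  exact fun x _ => key x

lemma mem_cl_gen0 (y : FP) (hy : y ∈ Subgroup.closure {gen 0}) : y = 1 ∨ y = gen 0 := by
  induction hy using Subgroup.closure_induction with
  | mem z hz => exact Or.inr hz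
  | one => exact Or.inl rfl
  | mul a b _ _ ha hb =>
      rcases ha with h | h <;> rcases hb with h' | h' <;>
        simp [h, h', gen_sq]
  | inv a _ ha =>
      rcases ha with h | h
      · simp [h]
      · right; rw [h, inv_eq_iff_mul_eq_one, gen_sq]

/-- `Ev` is the unique maximal proper S₀-invariant subgroup of `FP`: every proper
S₀-invariant subgroup of `FP` is contained in `Ev`. -/
theorem stmt3 : ∀ H : Subgroup FP, S0Inv H → H ≠ ⊤ → H ≤ Ev := by
  intro H hS hne
  by_contra hle
  apply hne
  rw [SetLike.le_def] at hle
  push_neg at hle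
  obtain ⟨x, hxH, hxE⟩ := hle
  have hpar : par x = Multiplicative.ofAdd 1 := by
    have h1 : par x ≠ 1 := hxE
    rcases z2cases (par x) with h | h
    · exact absurd h h1
    · exact h
  -- filtration
  set K : ℕ → Subgroup FP := fun N => Subgroup.closure (gen '' Set.Iio N) with hK
  have hmono : Monotone K := fun a b hab =>
    Subgroup.closure_mono (Set.image_mono (fun i hi => lt_of_lt_of_le hi hab))
  have hdir : Directed (· ≤ ·) K := hmono.directed_le
  have htop : (⨆ N, K N) = ⊤ := by
    rw [eq_top_iff, ← top_gen, Subgroup.closure_le]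
    rintro _ ⟨i, rfl⟩
    exact Subgroup.mem_iSup_of_mem (i + 1)
      (Subgroup.subset_closure ⟨i, Nat.lt_succ_self i, rfl⟩)
  have hx : x ∈ ⨆ N, K N := htop ▸ Subgroup.mem_top x
  rw [Subgroup.mem_iSup_of_directed hdir] at hx
  obtain ⟨N, hxN⟩ := hx
  -- collapse letters below N to 0
  set f : ℕ → ℕ := fun i => if i < N then 0 else i with hf
  have hfin : FinSupp f := ⟨N, fun k hk => by simp [hf, Nat.not_lt.2 hk]⟩
  have hyH : ident f x ∈ H := hS.1 f hfin x hxH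
  have hycl : ident f x ∈ Subgroup.closure {gen 0} := by
    have : (Subgroup.closure (gen '' Set.Iio N)).map (ident f) ≤ Subgroup.closure {gen 0} := by
      rw [MonoidHom.map_closure, Subgroup.closure_le]
      rintro _ ⟨_, ⟨i, hi, rfl⟩, rfl⟩
      have hi' : i < N := hi
      exact Subgroup.subset_closure (by simp [ident_gen, hf, hi'])
    exact this ⟨x, hxN, rfl⟩
  have hypar : par (ident f x) = Multiplicative.ofAdd 1 := by
    have := congrArg (fun φ : FP →* Z2 => φ x) (par_ident f)
    simpa using this.trans hpar
  have hgen0 : gen 0 ∈ H := by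
    rcases mem_cl_gen0 _ hycl with h | h
    · rw [h, MonoidHom.map_one] at hypar
      exact absurd hypar.symm (by decide)
    · rwa [h] at hyH
  -- all generators in H
  have hall : ∀ k, gen k ∈ H := by
    intro k
    set g : ℕ → ℕ := fun i => if i = 0 then k else i with hg
    have hgfin : FinSupp g := ⟨k + 1, fun j hj => by
      have : j ≠ 0 := by omega
      simp [hg, this]⟩
    have := hS.1 g hgfin (gen 0) hgen0
    rwa [ident_gen, hg] at this
  rw [eq_top_iff, ← top_gen, Subgroup.closure_le]
  rintro _ ⟨i, rfl⟩
  exact hall i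

end
end

section
/- For any S-invariant subgroup H of F_∞ and any element w ∈ H involving only the letters x_1,...,x_n with exponent sums e_1,...,e_n, each power x_i^{e_i} belongs to H. -/
noncomputable section

abbrev F : Type := FreeGroup ℕ

/-- `f` moves only finitely many letters. -/
def FinSuppF (f : ℕ → ℕ) : Prop := ∃ n, ∀ k ≥ n, f k = k

/-- The endomorphism of `F` identifying letters according to `f`. -/
def identF (f : ℕ → ℕ) : Monoid.End F :=
  (FreeGroup.lift (fun k => FreeGroup.of (f k)) : F →* F)

/-- The endomorphism `x_k ↦ x_i⁻¹ x_k`. -/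
def shiftF (i : ℕ) : Monoid.End F :=
  (FreeGroup.lift (fun k => (FreeGroup.of i)⁻¹ * FreeGroup.of k) : F →* F)

/-- The endomorphism deleting the letter `j` (sending `x_j` to `1`). -/
def delF (j : ℕ) : Monoid.End F :=
  (FreeGroup.lift (fun k => if k = j then 1 else FreeGroup.of k) : F →* F)

/-- The endomorphism `x_k ↦ x_k⁻¹` for all `k`. -/
def invF : Monoid.End F :=
  (FreeGroup.lift (fun k => (FreeGroup.of k)⁻¹) : F →* F)

/-- The generating set of the semigroup `S ⊆ End(F_∞)`: finite identifications of
letters, the maps `x_k ↦ x_i⁻¹ x_k`, deletions of letters, the global inversion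
`x_k ↦ x_k⁻¹`, and all inner automorphisms. -/
def SGen : Set (Monoid.End F) :=
  {φ | (∃ f : ℕ → ℕ, FinSuppF f ∧ φ = identF f) ∨
       (∃ i : ℕ, φ = shiftF i) ∨
       (∃ j : ℕ, φ = delF j) ∨
       φ = invF ∨
       (∃ g : F, φ = ((MulAut.conj g : F ≃* F) : F →* F))}

/-- The semigroup `S` of endomorphisms of `F_∞`. -/
def S : Subsemigroup (Monoid.End F) := Subsemigroup.closure SGen

/-- A subgroup is `S`-invariant if it is preserved by every element of `S`. -/
def SInv (H : Subgroup F) : Prop := ∀ φ ∈ S, ∀ x ∈ H, φ x ∈ H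

/-- Exponent sum of the letter `i` in a word of `F`. -/
def expSum (i : ℕ) : F →* Multiplicative ℤ :=
  FreeGroup.lift (fun k => if k = i then Multiplicative.ofAdd (1 : ℤ) else 1)

-- auxiliary
def delsF (l : List ℕ) : Monoid.End F := (l.map delF).prod

lemma delF_of (j k : ℕ) :
    delF j (FreeGroup.of k) = if k = j then 1 else FreeGroup.of k := by
  show (FreeGroup.lift (fun k => if k = j then 1 else FreeGroup.of k) : F →* F) _ = _
  rw [FreeGroup.lift_apply_of]

lemma delsF_of (l : List ℕ) (k : ℕ) :
    delsF l (FreeGroup.of k) = if k ∈ l then 1 else FreeGroup.of k := by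
  induction l with
  | nil => simp [delsF]
  | cons a t ih =>
    have : delsF (a :: t) (FreeGroup.of k) = delF a (delsF t (FreeGroup.of k)) := rfl
    rw [this, ih]
    by_cases hk : k ∈ t
    · simp [hk, map_one]
    · rw [if_neg hk, delF_of]
      by_cases h : k = a
      · simp [h]
      · simp [h, hk]

lemma delF_mem_S (j : ℕ) : delF j ∈ S :=
  Subsemigroup.subset_closure (Or.inr (Or.inr (Or.inl ⟨j, rfl⟩)))

lemma delsF_mem_S (l : List ℕ) (hl : l ≠ []) : delsF l ∈ S := by
  induction l with
  | nil => exact absurd rfl hl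
  | cons a t ih =>
    cases t with
    | nil =>
      have : delsF [a] = delF a := by simp [delsF]
      rw [this]; exact delF_mem_S a
    | cons b t' =>
      have : delsF (a :: b :: t') = delF a * delsF (b :: t') := rfl
      rw [this]
      exact mul_mem (delF_mem_S a) (ih (by simp))

/-- If `H ≤ F_∞` is `S`-invariant and `w ∈ H` involves only the letters
`x_0, …, x_{n-1}`, then each `x_i ^ (e_i)` lies in `H`, where `e_i` is the exponent
sum of `x_i` in `w`. -/
theorem stmt13 (H : Subgroup F) (hH : SInv H) (n : ℕ) (w : F) (hw : w ∈ H)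
    (hsupp : w ∈ Subgroup.closure {g : F | ∃ i < n, g = FreeGroup.of i}) :
    ∀ i < n, (FreeGroup.of i) ^ (Multiplicative.toAdd (expSum i w)) ∈ H := by
  intro i hi
  set l : List ℕ := (List.range (n + 1)).filter (fun k => k ≠ i) with hl
  have hmem : ∀ k, k ∈ l ↔ k < n + 1 ∧ k ≠ i := by
    intro k; simp [hl, List.mem_filter, List.mem_range]
  have hne : l ≠ [] := by
    intro h
    have : n ∈ l := (hmem n).2 ⟨Nat.lt_succ_self n, fun hni => by omega⟩
    rw [h] at this; exact absurd this List.not_mem_nil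
  have key : ∀ v ∈ Subgroup.closure {g : F | ∃ j < n, g = FreeGroup.of j},
      delsF l v = (FreeGroup.of i) ^ (Multiplicative.toAdd (expSum i v)) := by
    intro v hv
    induction hv using Subgroup.closure_induction with
    | mem g hg =>
      obtain ⟨j, hj, rfl⟩ := hg
      rw [delsF_of]
      by_cases hji : j = i
      · subst hji
        have h1 : j ∉ l := by rw [hmem]; simp
        rw [if_neg h1]
        simp [expSum]
      · have h1 : j ∈ l := (hmem j).2 ⟨by omega, hji⟩
        rw [if_pos h1]
        simp [expSum, hji]
    | one => simp
    | mul a b _ _ ha hb =>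
      rw [map_mul, ha, hb, map_mul, ← zpow_add, toAdd_mul]
    | inv a _ ha =>
      rw [map_inv, ha, map_inv, ← zpow_neg, toAdd_inv]
  have := hH (delsF l) (delsF_mem_S l hne) w hw
  rwa [key w hsupp] at this

end
end
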